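/- Let A be an Archimedean, infinitesimal-free, proper *-ring. Then the relation a ≤ b defined by ⌈a − b⌉ = 0 is a partial order on A, and for all a, b, c ∈ A: a ≤ b implies a + c ≤ b + c and cac* ≤ cbc*. -/

import Mathlib

open scoped ENNReal NNReal

/-- `B_Σ`: the set of finite sums `p₁ + ⋯ + p_k` (`k ≥ 1`) with each `pᵢ = bᵢbᵢ*`
for some `bᵢ ∈ B`. -/
def starSums {A : Type*} [NonUnitalRing A] [StarRing A] (B : Set A) : Set A :=
  {x | ∃ (n : ℕ) (f : Fin (n + 1) → A), (∀ i, f i ∈ B) ∧ x = ∑ i, f i * star (f i)}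

/-- `⌈a⌉ = sup_b inf {m/n : m(bb*) − n(bab*) ∈ A_Σ}` computed in `[0,∞]`. -/
noncomputable def ceil' {A : Type*} [NonUnitalRing A] [StarRing A] (a : A) : ℝ≥0∞ :=
  ⨆ b : A, sInf {q : ℝ≥0∞ | ∃ m n : ℕ, 0 < m ∧ 0 < n ∧ q = (m : ℝ≥0∞) / (n : ℝ≥0∞) ∧
    m • (b * star b) - n • (b * a * star b) ∈ starSums (Set.univ : Set A)}

/-- The order `a ≤ b ⇔ ⌈a − b⌉ = 0`. -/
def cle {A : Type*} [NonUnitalRing A] [StarRing A] (a b : A) : Prop :=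
  ceil' (a - b) = 0

section Aux

variable {A : Type*} [NonUnitalRing A] [StarRing A]

/- ### Arithmetic helpers in `ℝ≥0∞` -/

private lemma coe_nat_div (m n : ℕ) (hn : 0 < n) :
    (m : ℝ≥0∞) / (n : ℝ≥0∞) = (((m : ℝ≥0) / (n : ℝ≥0) : ℝ≥0) : ℝ≥0∞) := by
  rw [ENNReal.coe_div (by exact_mod_cast hn.ne')]
  simp

private lemma ediv_add (m₁ n₁ m₂ n₂ : ℕ) (h₁ : 0 < n₁) (h₂ : 0 < n₂) :
    ((m₁ * n₂ + m₂ * n₁ : ℕ) : ℝ≥0∞) / ((n₁ * n₂ : ℕ) : ℝ≥0∞)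
      = (m₁ : ℝ≥0∞) / (n₁ : ℝ≥0∞) + (m₂ : ℝ≥0∞) / (n₂ : ℝ≥0∞) := by
  rw [coe_nat_div _ _ (by positivity), coe_nat_div _ _ h₁, coe_nat_div _ _ h₂,
    ← ENNReal.coe_add]
  congr 1
  have h₁' : (n₁ : ℝ≥0) ≠ 0 := by exact_mod_cast h₁.ne'
  have h₂' : (n₂ : ℝ≥0) ≠ 0 := by exact_mod_cast h₂.ne'
  field_simp
  push_cast
  ring

private lemma ediv_mul (m₁ n₁ m₂ n₂ : ℕ) (h₁ : 0 < n₁) (h₂ : 0 < n₂) :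
    ((m₁ * m₂ : ℕ) : ℝ≥0∞) / ((n₁ * n₂ : ℕ) : ℝ≥0∞)
      = ((m₁ : ℝ≥0∞) / (n₁ : ℝ≥0∞)) * ((m₂ : ℝ≥0∞) / (n₂ : ℝ≥0∞)) := by
  rw [coe_nat_div _ _ (by positivity), coe_nat_div _ _ h₁, coe_nat_div _ _ h₂,
    ← ENNReal.coe_mul]
  congr 1
  have h₁' : (n₁ : ℝ≥0) ≠ 0 := by exact_mod_cast h₁.ne'
  have h₂' : (n₂ : ℝ≥0) ≠ 0 := by exact_mod_cast h₂.ne'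
  field_simp
  push_cast
  ring

private lemma ediv_pos (m n : ℕ) (hm : 0 < m) :
    (0 : ℝ≥0∞) < (m : ℝ≥0∞) / (n : ℝ≥0∞) :=
  ENNReal.div_pos (by exact_mod_cast hm.ne') (by simp)

private lemma ediv_ne_top (m n : ℕ) (hn : 0 < n) :
    (m : ℝ≥0∞) / (n : ℝ≥0∞) ≠ ⊤ := by
  rw [coe_nat_div _ _ hn]; exact ENNReal.coe_ne_top

/- ### Closure properties of `starSums` -/

private lemma mem_starSums_self (b : A) : b * star b ∈ starSums (Set.univ : Set A) :=
  ⟨0, fun _ => b, fun _ => Set.mem_univ _, by simp⟩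

private lemma starSums_add_single {x : A} (hx : x ∈ starSums (Set.univ : Set A)) (b : A) :
    x + b * star b ∈ starSums (Set.univ : Set A) := by
  obtain ⟨n, f, -, rfl⟩ := hx
  refine ⟨n + 1, Fin.snoc f b, fun _ => Set.mem_univ _, ?_⟩
  conv_rhs => rw [Fin.sum_univ_castSucc]
  simp

private lemma starSums_add {x y : A} (hx : x ∈ starSums (Set.univ : Set A))
    (hy : y ∈ starSums (Set.univ : Set A)) : x + y ∈ starSums (Set.univ : Set A) := by
  obtain ⟨m, g, -, rfl⟩ := hy
  induction m with
  | zero => simpa using starSums_add_single hx (g 0)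
  | succ m ih =>
      rw [Fin.sum_univ_castSucc, ← add_assoc]
      exact starSums_add_single (ih (fun i => g i.castSucc)) _

private lemma starSums_nsmul_succ {x : A} (hx : x ∈ starSums (Set.univ : Set A)) (k : ℕ) :
    (k + 1) • x ∈ starSums (Set.univ : Set A) := by
  induction k with
  | zero => simpa using hx
  | succ k ih => rw [succ_nsmul]; exact starSums_add ih hx

private lemma starSums_nsmul {x : A} (hx : x ∈ starSums (Set.univ : Set A)) {k : ℕ}
    (hk : 0 < k) : k • x ∈ starSums (Set.univ : Set A) := by
  obtain ⟨k, rfl⟩ := Nat.exists_eq_add_of_le hk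
  rw [show 0 + 1 + k = k + 1 by omega]
  exact starSums_nsmul_succ hx k

/- ### The basic quantities -/

/-- The membership predicate underlying `ceil'`. -/
private def P (b a : A) (m n : ℕ) : Prop :=
  m • (b * star b) - n • (b * a * star b) ∈ starSums (Set.univ : Set A)

/-- The set whose infimum is taken in `ceil'`. -/
private def S (b a : A) : Set ℝ≥0∞ :=
  {q : ℝ≥0∞ | ∃ m n : ℕ, 0 < m ∧ 0 < n ∧ q = (m : ℝ≥0∞) / (n : ℝ≥0∞) ∧
    m • (b * star b) - n • (b * a * star b) ∈ starSums (Set.univ : Set A)}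

private lemma ceil'_def (a : A) : ceil' a = ⨆ b : A, sInf (S b a) := rfl

private lemma ceil'_eq_zero_iff (a : A) : ceil' a = 0 ↔ ∀ b : A, sInf (S b a) = 0 := by
  rw [ceil'_def]
  exact ENNReal.iSup_eq_zero

private lemma sInf_S_eq_zero (b a : A)
    (h : ∀ ε : ℝ≥0∞, 0 < ε → ∃ m n : ℕ, 0 < m ∧ 0 < n ∧
      (m : ℝ≥0∞) / (n : ℝ≥0∞) ≤ ε ∧ P b a m n) :
    sInf (S b a) = 0 := by
  refine le_antisymm ?_ zero_le
  refine ENNReal.le_of_forall_pos_le_add fun ε hε _ => ?_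
  obtain ⟨m, n, hm, hn, hle, hP⟩ := h ε (by exact_mod_cast hε)
  calc sInf (S b a) ≤ (m : ℝ≥0∞) / (n : ℝ≥0∞) := sInf_le ⟨m, n, hm, hn, rfl, hP⟩
    _ ≤ ε := hle
    _ = 0 + ε := by rw [zero_add]

private lemma exists_of_sInf_S_eq_zero {b a : A} (h : sInf (S b a) = 0)
    {ε : ℝ≥0∞} (hε : 0 < ε) :
    ∃ m n : ℕ, 0 < m ∧ 0 < n ∧ (m : ℝ≥0∞) / (n : ℝ≥0∞) < ε ∧ P b a m n := by
  have : sInf (S b a) < ε := h ▸ hε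
  obtain ⟨q, ⟨m, n, hm, hn, rfl, hP⟩, hq⟩ := sInf_lt_iff.mp this
  exact ⟨m, n, hm, hn, hq, hP⟩

private lemma exists_of_ceil'_ne_top {a : A} (h : ceil' a ≠ ⊤) (b : A) :
    ∃ m n : ℕ, 0 < m ∧ 0 < n ∧ P b a m n := by
  by_contra hc
  push_neg at hc
  have hS : S b a = ∅ := by
    ext q
    simp only [S, Set.mem_setOf_eq, Set.mem_empty_iff_false, iff_false]
    rintro ⟨m, n, hm, hn, -, hP⟩
    exact (hc m n hm hn) hP
  have : sInf (S b a) ≤ ceil' a := le_iSup (fun b => sInf (S b a)) b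
  rw [hS, sInf_empty] at this
  exact h (top_le_iff.mp this)

/- ### Group-theoretic combination identities -/

private lemma comb_add {M : Type*} [AddCommGroup M] (u v w : M) (m₁ n₁ m₂ n₂ : ℕ) :
    n₂ • (m₁ • u - n₁ • v) + n₁ • (m₂ • u - n₂ • w)
      = (m₁ * n₂ + m₂ * n₁) • u - (n₁ * n₂) • (v + w) := by
  simp [smul_sub, smul_add, smul_smul, add_smul, mul_comm]
  abel

private lemma comb_mul {M : Type*} [AddCommGroup M] (u v w : M) (m₁ n₁ m₂ n₂ : ℕ) :
    m₂ • (m₁ • u - n₁ • v) + n₁ • (m₂ • v - n₂ • w)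
      = (m₁ * m₂) • u - (n₁ * n₂) • w := by
  simp [smul_sub, smul_smul, mul_comm]

/- ### Key facts about `ceil'` -/

/-- `⌈0⌉ = 0`. -/
private lemma ceil'_zero : ceil' (0 : A) = 0 := by
  rw [ceil'_eq_zero_iff]
  intro b
  refine sInf_S_eq_zero b 0 fun ε hε => ?_
  obtain ⟨n, hn⟩ : ∃ n : ℕ, ((n : ℝ≥0∞))⁻¹ < ε := ENNReal.exists_inv_nat_lt hε.ne'
  refine ⟨1, n + 1, one_pos, Nat.succ_pos n, ?_, ?_⟩
  · rw [Nat.cast_one, one_div]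
    refine le_trans (ENNReal.inv_le_inv.mpr ?_) hn.le
    exact_mod_cast Nat.le_succ n
  · show (1 : ℕ) • (b * star b) - (n + 1) • (b * 0 * star b) ∈ starSums (Set.univ : Set A)
    simpa using mem_starSums_self b

/-- Subadditivity at level zero: if `⌈x⌉ = 0` and `⌈y⌉ = 0` then `⌈x + y⌉ = 0`. -/
private lemma ceil'_add_zero {x y : A} (hx : ceil' x = 0) (hy : ceil' y = 0) :
    ceil' (x + y) = 0 := by
  rw [ceil'_eq_zero_iff] at hx hy ⊢
  intro b
  refine sInf_S_eq_zero b _ fun ε hε => ?_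
  have hε2 : (0 : ℝ≥0∞) < ε / 2 := ENNReal.div_pos hε.ne' (by norm_num)
  obtain ⟨m₁, n₁, hm₁, hn₁, hlt₁, hP₁⟩ := exists_of_sInf_S_eq_zero (hx b) hε2
  obtain ⟨m₂, n₂, hm₂, hn₂, hlt₂, hP₂⟩ := exists_of_sInf_S_eq_zero (hy b) hε2
  refine ⟨m₁ * n₂ + m₂ * n₁, n₁ * n₂, by positivity, by positivity, ?_, ?_⟩
  · rw [ediv_add m₁ n₁ m₂ n₂ hn₁ hn₂]
    calc (m₁ : ℝ≥0∞) / n₁ + (m₂ : ℝ≥0∞) / n₂ ≤ ε / 2 + ε / 2 :=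
          add_le_add hlt₁.le hlt₂.le
      _ = ε := ENNReal.add_halves ε
  · show (m₁ * n₂ + m₂ * n₁) • (b * star b) - (n₁ * n₂) • (b * (x + y) * star b)
        ∈ starSums (Set.univ : Set A)
    have hxy : b * (x + y) * star b = b * x * star b + b * y * star b := by
      rw [mul_add, add_mul]
    rw [hxy, ← comb_add]
    exact starSums_add (starSums_nsmul hP₁ hn₂) (starSums_nsmul hP₂ hn₁)

/-- `⌈−cc*⌉ = 0` for every `c`. -/
private lemma ceil'_neg_mul_star (c : A) : ceil' (-(c * star c)) = 0 := by
  rw [ceil'_eq_zero_iff]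
  intro b
  refine sInf_S_eq_zero b _ fun ε hε => ?_
  obtain ⟨n, hn⟩ : ∃ n : ℕ, ((n : ℝ≥0∞))⁻¹ < ε := ENNReal.exists_inv_nat_lt hε.ne'
  refine ⟨1, n + 1, one_pos, Nat.succ_pos n, ?_, ?_⟩
  · rw [Nat.cast_one, one_div]
    refine le_trans (ENNReal.inv_le_inv.mpr ?_) hn.le
    exact_mod_cast Nat.le_succ n
  · show (1 : ℕ) • (b * star b) - (n + 1) • (b * (-(c * star c)) * star b)
        ∈ starSums (Set.univ : Set A)
    have h1 : b * (-(c * star c)) * star b = -((b * c) * star (b * c)) := by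
      rw [star_mul]
      noncomm_ring
    rw [h1, smul_neg, sub_neg_eq_add, one_smul]
    exact starSums_add (mem_starSums_self b)
      (starSums_nsmul (mem_starSums_self (b * c)) (Nat.succ_pos n))

/-- Conjugation at level zero: if `⌈x⌉ = 0` then `⌈cxc*⌉ = 0`. -/
private lemma ceil'_conj_zero (hArch : ∀ a : A, ceil' (-a) = 0 → ceil' a ≠ ⊤)
    {x : A} (hx : ceil' x = 0) (c : A) : ceil' (c * x * star c) = 0 := by
  have hfin : ceil' (c * star c) ≠ ⊤ := hArch _ (ceil'_neg_mul_star c)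
  rw [ceil'_eq_zero_iff] at hx ⊢
  intro b
  obtain ⟨m₁, n₁, hm₁, hn₁, hP₁⟩ := exists_of_ceil'_ne_top hfin b
  refine sInf_S_eq_zero b _ fun ε hε => ?_
  set k : ℝ≥0∞ := (m₁ : ℝ≥0∞) / (n₁ : ℝ≥0∞) with hk
  have hk0 : k ≠ 0 := (ediv_pos m₁ n₁ hm₁).ne'
  have hktop : k ≠ ⊤ := ediv_ne_top m₁ n₁ hn₁
  have hε' : (0 : ℝ≥0∞) < ε / k := ENNReal.div_pos hε.ne' hktop
  obtain ⟨m₂, n₂, hm₂, hn₂, hlt₂, hP₂⟩ := exists_of_sInf_S_eq_zero (hx (b * c)) hε'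
  refine ⟨m₁ * m₂, n₁ * n₂, by positivity, by positivity, ?_, ?_⟩
  · rw [ediv_mul m₁ n₁ m₂ n₂ hn₁ hn₂, ← hk]
    calc k * ((m₂ : ℝ≥0∞) / n₂) ≤ k * (ε / k) :=
          mul_le_mul_right hlt₂.le k
      _ ≤ ε := ENNReal.mul_div_le
  · show (m₁ * m₂) • (b * star b) - (n₁ * n₂) • (b * (c * x * star c) * star b)
        ∈ starSums (Set.univ : Set A)
    have e1 : b * (c * star c) * star b = (b * c) * star (b * c) := by
      rw [star_mul]; noncomm_ring
    have e2 : b * (c * x * star c) * star b = (b * c) * x * star (b * c) := by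
      rw [star_mul]; noncomm_ring
    rw [e2, ← comb_mul (b * star b) ((b * c) * star (b * c)) ((b * c) * x * star (b * c))
      m₁ n₁ m₂ n₂]
    refine starSums_add (starSums_nsmul ?_ hm₂) (starSums_nsmul hP₂ hn₁)
    have := hP₁
    unfold P at this
    rwa [e1] at this

end Aux

theorem stmt12 {A : Type*} [NonUnitalRing A] [StarRing A]
    (hArch : ∀ a : A, ceil' (-a) = 0 → ceil' a ≠ ⊤)
    (hInf : ∀ a : A, ceil' a = 0 → ceil' (-a) = 0 → a = 0)
    (hProper : ∀ a : A, a * star a = 0 → a = 0) :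
    (∀ a : A, cle a a) ∧
    (∀ a b : A, cle a b → cle b a → a = b) ∧
    (∀ a b c : A, cle a b → cle b c → cle a c) ∧
    (∀ a b c : A, cle a b → cle (a + c) (b + c)) ∧
    (∀ a b c : A, cle a b → cle (c * a * star c) (c * b * star c)) := by
  refine ⟨fun a => ?_, fun a b hab hba => ?_, fun a b c hab hbc => ?_,
    fun a b c hab => ?_, fun a b c hab => ?_⟩
  · show ceil' (a - a) = 0
    rw [sub_self]
    exact ceil'_zero
  · have h1 : ceil' (a - b) = 0 := hab
    have h2 : ceil' (-(a - b)) = 0 := by rw [neg_sub]; exact hba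
    exact sub_eq_zero.mp (hInf _ h1 h2)
  · show ceil' (a - c) = 0
    have : a - c = (a - b) + (b - c) := by abel
    rw [this]
    exact ceil'_add_zero hab hbc
  · show ceil' (a + c - (b + c)) = 0
    have : a + c - (b + c) = a - b := by abel
    rw [this]
    exact hab
  · show ceil' (c * a * star c - c * b * star c) = 0
    have : c * a * star c - c * b * star c = c * (a - b) * star c := by noncomm_ring
    rw [this]
    exact ceil'_conj_zero hArch hab c
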